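/- Let k ≥ 2 be an integer and let A and B be trace-free symmetric k-linear forms on V. Then for all v, w ∈ V there holds Σ_{(a₁,…,a_{k−1}) ∈ {1,2}^{k−1}} [ A(e_{a₁},…,e_{a_{k−1}}, v)·B(e_{a₁},…,e_{a_{k−1}}, w) + A(e_{a₁},…,e_{a_{k−1}}, w)·B(e_{a₁},…,e_{a_{k−1}}, v) ] = ⟨A,B⟩·⟨v,w⟩. -/

import Mathlib

open scoped BigOperators

section Aux

variable {V : Type*} [NormedAddCommGroup V] [InnerProductSpace ℝ V]

lemma aux_key (f g : Fin 2 → Fin 2 → ℝ)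
    (hf : ∀ i j, f i j = f j i) (hg : ∀ i j, g i j = g j i)
    (hftr : f 0 0 + f 1 1 = 0) (hgtr : g 0 0 + g 1 1 = 0) (p q : Fin 2) :
    ∑ i : Fin 2, (f i p * g i q + f i q * g i p)
      = (if p = q then (1:ℝ) else 0) * ∑ i : Fin 2, ∑ j : Fin 2, f i j * g i j := by
  have h1 : f 1 1 = -(f 0 0) := by linarith
  have h2 : g 1 1 = -(g 0 0) := by linarith
  have h3 : f 1 0 = f 0 1 := hf 1 0
  have h4 : g 1 0 = g 0 1 := hg 1 0
  fin_cases p <;> fin_cases q <;>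
    simp [Fin.sum_univ_two, h1, h2, h3, h4] <;> ring

lemma aux_consfun {n : ℕ} (e : Fin 2 → V) (j : Fin 2) (b : Fin n → Fin 2) :
    (fun i => e (Fin.cons (α := fun _ => Fin 2) j b i))
      = Fin.cons (e j) (fun k => e (b k)) := by
  funext i
  refine Fin.cases ?_ (fun k => ?_) i <;> simp

lemma aux_swap {n : ℕ} (A : MultilinearMap ℝ (fun _ : Fin (n + 2) => V) ℝ)
    (hA : ∀ (σ : Equiv.Perm (Fin (n + 2))) (v : Fin (n + 2) → V), A (v ∘ σ) = A v)
    (x y : V) (f : Fin n → V) :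
    A (Fin.cons x (Fin.cons y f)) = A (Fin.cons y (Fin.cons x f)) := by
  rw [← hA (Equiv.swap 0 1) (Fin.cons y (Fin.cons x f))]
  congr 1
  have h1 : (1 : Fin (n + 2)) = Fin.succ 0 := (Fin.succ_zero_eq_one).symm
  funext i
  refine Fin.cases ?_ (fun j => Fin.cases ?_ (fun k => ?_) j) i
  · rw [Function.comp_apply, Equiv.swap_apply_left, h1, Fin.cons_succ, Fin.cons_zero,
      Fin.cons_zero]
  · rw [Function.comp_apply, Fin.cons_succ, Fin.cons_zero, Fin.succ_zero_eq_one,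
      Equiv.swap_apply_right, Fin.cons_zero]
  · have hne0 : (k.succ.succ : Fin (n + 2)) ≠ 0 := Fin.succ_ne_zero _
    have hne1 : (k.succ.succ : Fin (n + 2)) ≠ 1 := by
      rw [h1]; exact fun h => Fin.succ_ne_zero k (Fin.succ_injective _ h)
    rw [Function.comp_apply, Equiv.swap_apply_of_ne_of_ne hne0 hne1, Fin.cons_succ, Fin.cons_succ,
      Fin.cons_succ, Fin.cons_succ]

lemma aux_rot {n : ℕ} (A : MultilinearMap ℝ (fun _ : Fin (n + 2) => V) ℝ)
    (hA : ∀ (σ : Equiv.Perm (Fin (n + 2))) (v : Fin (n + 2) → V), A (v ∘ σ) = A v)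
    (x : V) (f : Fin (n + 1) → V) :
    A (Fin.snoc f x) = A (Fin.cons x f) := by
  rw [Fin.snoc_eq_cons_rotate]
  exact hA (finRotate (n + 2)) (Fin.cons x f)

lemma aux_expand {n : ℕ} (e : OrthonormalBasis (Fin 2) ℝ V)
    (A : MultilinearMap ℝ (fun _ : Fin (n + 2) => V) ℝ) (f : Fin (n + 1) → V) (v : V) :
    A (Fin.snoc f v) = ∑ p : Fin 2, (inner ℝ (e p) v : ℝ) * A (Fin.snoc f (e p)) := by
  have h : ∀ x : V, A (Fin.snoc f x) = A.toLinearMap (Fin.snoc f 0) (Fin.last (n + 1)) x := by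
    intro x
    rw [MultilinearMap.toLinearMap_apply, Fin.update_snoc_last]
  rw [h v]
  conv_lhs => rw [← e.sum_repr' v]
  rw [map_sum]
  refine Finset.sum_congr rfl fun p _ => ?_
  rw [LinearMap.map_smul, ← h (e p)]
  simp [smul_eq_mul]

lemma aux_sum_split {m : ℕ} (F : (Fin (m + 1) → Fin 2) → ℝ) :
    ∑ a : Fin (m + 1) → Fin 2, F a
      = ∑ j : Fin 2, ∑ b : Fin m → Fin 2, F (Fin.cons j b) := by
  have h2 : ∑ x : Fin 2 × (Fin m → Fin 2), F (Fin.cons x.1 x.2)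
      = ∑ j : Fin 2, ∑ b : Fin m → Fin 2, F (Fin.cons j b) := by
    rw [Fintype.sum_prod_type]
  rw [← h2]
  exact (Fintype.sum_equiv (Fin.consEquiv (fun _ : Fin (m + 1) => Fin 2))
    (fun x => F (Fin.cons x.1 x.2)) F (fun x => by simp [Fin.consEquiv])).symm

end Aux

/-- Let `V` be a 2-dimensional real inner product space with orthonormal basis `e`,
and let `A`, `B` be trace-free symmetric `k`-linear forms on `V` (here `k = n + 2 ≥ 2`).
Then for all `v w : V`,
`∑_{a ∈ {1,2}^{k-1}} [A(e_{a₁},…,e_{a_{k-1}},v)·B(e_{a₁},…,e_{a_{k-1}},w)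
  + A(e_{a₁},…,e_{a_{k-1}},w)·B(e_{a₁},…,e_{a_{k-1}},v)] = ⟨A,B⟩·⟨v,w⟩`. -/
theorem stmt1 {V : Type*} [NormedAddCommGroup V] [InnerProductSpace ℝ V]
    (e : OrthonormalBasis (Fin 2) ℝ V) (n : ℕ)
    (A B : MultilinearMap ℝ (fun _ : Fin (n + 2) => V) ℝ)
    (hAsymm : ∀ (σ : Equiv.Perm (Fin (n + 2))) (v : Fin (n + 2) → V), A (v ∘ σ) = A v)
    (hBsymm : ∀ (σ : Equiv.Perm (Fin (n + 2))) (v : Fin (n + 2) → V), B (v ∘ σ) = B v)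
    (hAtf : ∀ v : Fin n → V, ∑ i : Fin 2, A (Fin.cons (e i) (Fin.cons (e i) v)) = 0)
    (hBtf : ∀ v : Fin n → V, ∑ i : Fin 2, B (Fin.cons (e i) (Fin.cons (e i) v)) = 0)
    (v w : V) :
    ∑ a : Fin (n + 1) → Fin 2,
      (A (Fin.snoc (fun i => e (a i)) v) * B (Fin.snoc (fun i => e (a i)) w)
        + A (Fin.snoc (fun i => e (a i)) w) * B (Fin.snoc (fun i => e (a i)) v))
      = (∑ a : Fin (n + 2) → Fin 2, A (fun i => e (a i)) * B (fun i => e (a i)))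
          * (inner ℝ v w : ℝ) := by
  classical
  set S : ℝ := ∑ a : Fin (n + 2) → Fin 2, A (fun i => e (a i)) * B (fun i => e (a i)) with hS
  set c : Fin 2 → ℝ := fun p => (inner ℝ (e p) v : ℝ) with hc
  set d : Fin 2 → ℝ := fun p => (inner ℝ (e p) w : ℝ) with hd
  -- rewriting arguments into normal form
  have hcc : ∀ (i j : Fin 2) (b : Fin n → Fin 2),
      (fun k => e (Fin.cons (α := fun _ => Fin 2) i (Fin.cons j b) k))
        = Fin.cons (e i) (Fin.cons (e j) (fun k => e (b k))) := by
    intro i j b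
    rw [aux_consfun e i (Fin.cons j b), aux_consfun e j b]
  have hrwA : ∀ (p j : Fin 2) (b : Fin n → Fin 2),
      A (Fin.snoc (fun i => e (Fin.cons (α := fun _ => Fin 2) j b i)) (e p))
        = A (Fin.cons (e j) (Fin.cons (e p) (fun k => e (b k)))) := by
    intro p j b
    rw [aux_consfun e j b, aux_rot A hAsymm, aux_swap A hAsymm]
  have hrwB : ∀ (p j : Fin 2) (b : Fin n → Fin 2),
      B (Fin.snoc (fun i => e (Fin.cons (α := fun _ => Fin 2) j b i)) (e p))
        = B (Fin.cons (e j) (Fin.cons (e p) (fun k => e (b k)))) := by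
    intro p j b
    rw [aux_consfun e j b, aux_rot B hBsymm, aux_swap B hBsymm]
  -- the inner product sum S decomposed
  have hSb : S = ∑ b : Fin n → Fin 2, ∑ i : Fin 2, ∑ j : Fin 2,
      A (Fin.cons (e i) (Fin.cons (e j) (fun k => e (b k))))
        * B (Fin.cons (e i) (Fin.cons (e j) (fun k => e (b k)))) := by
    rw [hS, aux_sum_split]
    have h1 : ∀ i : Fin 2,
        (∑ b : Fin (n + 1) → Fin 2,
          A (fun k => e (Fin.cons (α := fun _ => Fin 2) i b k))
            * B (fun k => e (Fin.cons (α := fun _ => Fin 2) i b k)))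
        = ∑ j : Fin 2, ∑ b : Fin n → Fin 2,
            A (Fin.cons (e i) (Fin.cons (e j) (fun k => e (b k))))
              * B (Fin.cons (e i) (Fin.cons (e j) (fun k => e (b k)))) := by
      intro i
      rw [aux_sum_split (fun b => A (fun k => e (Fin.cons (α := fun _ => Fin 2) i b k))
            * B (fun k => e (Fin.cons (α := fun _ => Fin 2) i b k)))]
      exact Finset.sum_congr rfl fun j _ => Finset.sum_congr rfl fun b _ => by rw [hcc]
    rw [Finset.sum_congr rfl fun i _ => h1 i]
    have h4 : ∀ i : Fin 2,
        (∑ j : Fin 2, ∑ b : Fin n → Fin 2,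
          A (Fin.cons (e i) (Fin.cons (e j) (fun k => e (b k))))
            * B (Fin.cons (e i) (Fin.cons (e j) (fun k => e (b k)))))
        = ∑ b : Fin n → Fin 2, ∑ j : Fin 2,
            A (Fin.cons (e i) (Fin.cons (e j) (fun k => e (b k))))
              * B (Fin.cons (e i) (Fin.cons (e j) (fun k => e (b k)))) :=
      fun i => Finset.sum_comm
    rw [Finset.sum_congr rfl fun i _ => h4 i]
    exact Finset.sum_comm
  -- the key claim
  have claim : ∀ p q : Fin 2,
      (∑ a : Fin (n + 1) → Fin 2,
        (A (Fin.snoc (fun i => e (a i)) (e p)) * B (Fin.snoc (fun i => e (a i)) (e q))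
          + A (Fin.snoc (fun i => e (a i)) (e q)) * B (Fin.snoc (fun i => e (a i)) (e p))))
      = (if p = q then (1:ℝ) else 0) * S := by
    intro p q
    rw [aux_sum_split, Finset.sum_comm]
    have h2 : ∀ b : Fin n → Fin 2,
        (∑ j : Fin 2,
          (A (Fin.snoc (fun i => e (Fin.cons (α := fun _ => Fin 2) j b i)) (e p))
              * B (Fin.snoc (fun i => e (Fin.cons (α := fun _ => Fin 2) j b i)) (e q))
            + A (Fin.snoc (fun i => e (Fin.cons (α := fun _ => Fin 2) j b i)) (e q))
              * B (Fin.snoc (fun i => e (Fin.cons (α := fun _ => Fin 2) j b i)) (e p))))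
        = (if p = q then (1:ℝ) else 0) * ∑ i : Fin 2, ∑ j : Fin 2,
            A (Fin.cons (e i) (Fin.cons (e j) (fun k => e (b k))))
              * B (Fin.cons (e i) (Fin.cons (e j) (fun k => e (b k)))) := by
      intro b
      have step : (∑ j : Fin 2,
          (A (Fin.snoc (fun i => e (Fin.cons (α := fun _ => Fin 2) j b i)) (e p))
              * B (Fin.snoc (fun i => e (Fin.cons (α := fun _ => Fin 2) j b i)) (e q))
            + A (Fin.snoc (fun i => e (Fin.cons (α := fun _ => Fin 2) j b i)) (e q))
              * B (Fin.snoc (fun i => e (Fin.cons (α := fun _ => Fin 2) j b i)) (e p))))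
          = ∑ j : Fin 2,
            (A (Fin.cons (e j) (Fin.cons (e p) (fun k => e (b k))))
                * B (Fin.cons (e j) (Fin.cons (e q) (fun k => e (b k))))
              + A (Fin.cons (e j) (Fin.cons (e q) (fun k => e (b k))))
                * B (Fin.cons (e j) (Fin.cons (e p) (fun k => e (b k))))) :=
        Finset.sum_congr rfl fun j _ => by
          rw [hrwA p j b, hrwA q j b, hrwB p j b, hrwB q j b]
      rw [step]
      exact aux_key
        (fun i l => A (Fin.cons (e i) (Fin.cons (e l) (fun k => e (b k)))))
        (fun i l => B (Fin.cons (e i) (Fin.cons (e l) (fun k => e (b k)))))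
        (fun i l => aux_swap A hAsymm _ _ _)
        (fun i l => aux_swap B hBsymm _ _ _)
        (by have := hAtf (fun k => e (b k)); rwa [Fin.sum_univ_two] at this)
        (by have := hBtf (fun k => e (b k)); rwa [Fin.sum_univ_two] at this)
        p q
    rw [Finset.sum_congr rfl fun b _ => h2 b, ← Finset.mul_sum, hSb]
  -- expansion of v and w
  have e1 : ∀ a : Fin (n + 1) → Fin 2,
      A (Fin.snoc (fun i => e (a i)) v) * B (Fin.snoc (fun i => e (a i)) w)
        = ∑ p : Fin 2, ∑ q : Fin 2, c p * d q
            * (A (Fin.snoc (fun i => e (a i)) (e p)) * B (Fin.snoc (fun i => e (a i)) (e q))) := by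
    intro a
    rw [aux_expand e A _ v, aux_expand e B _ w, Finset.sum_mul_sum]
    exact Finset.sum_congr rfl fun p _ => Finset.sum_congr rfl fun q _ => by ring
  have e2 : ∀ a : Fin (n + 1) → Fin 2,
      A (Fin.snoc (fun i => e (a i)) w) * B (Fin.snoc (fun i => e (a i)) v)
        = ∑ p : Fin 2, ∑ q : Fin 2, c p * d q
            * (A (Fin.snoc (fun i => e (a i)) (e q)) * B (Fin.snoc (fun i => e (a i)) (e p))) := by
    intro a
    rw [aux_expand e A _ w, aux_expand e B _ v, Finset.sum_mul_sum, Finset.sum_comm]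
    exact Finset.sum_congr rfl fun p _ => Finset.sum_congr rfl fun q _ => by ring
  calc ∑ a : Fin (n + 1) → Fin 2,
      (A (Fin.snoc (fun i => e (a i)) v) * B (Fin.snoc (fun i => e (a i)) w)
        + A (Fin.snoc (fun i => e (a i)) w) * B (Fin.snoc (fun i => e (a i)) v))
      = ∑ a : Fin (n + 1) → Fin 2, ∑ p : Fin 2, ∑ q : Fin 2, c p * d q
          * (A (Fin.snoc (fun i => e (a i)) (e p)) * B (Fin.snoc (fun i => e (a i)) (e q))
            + A (Fin.snoc (fun i => e (a i)) (e q)) * B (Fin.snoc (fun i => e (a i)) (e p))) := by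
        refine Finset.sum_congr rfl fun a _ => ?_
        rw [e1 a, e2 a, ← Finset.sum_add_distrib]
        refine Finset.sum_congr rfl fun p _ => ?_
        rw [← Finset.sum_add_distrib]
        exact Finset.sum_congr rfl fun q _ => by ring
    _ = ∑ p : Fin 2, ∑ q : Fin 2, c p * d q
          * ∑ a : Fin (n + 1) → Fin 2,
            (A (Fin.snoc (fun i => e (a i)) (e p)) * B (Fin.snoc (fun i => e (a i)) (e q))
              + A (Fin.snoc (fun i => e (a i)) (e q)) * B (Fin.snoc (fun i => e (a i)) (e p))) := by
        rw [Finset.sum_comm]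
        refine Finset.sum_congr rfl fun p _ => ?_
        rw [Finset.sum_comm]
        exact Finset.sum_congr rfl fun q _ => (Finset.mul_sum _ _ _).symm
    _ = ∑ p : Fin 2, ∑ q : Fin 2, c p * d q * ((if p = q then (1:ℝ) else 0) * S) := by
        exact Finset.sum_congr rfl fun p _ => Finset.sum_congr rfl fun q _ => by rw [claim p q]
    _ = ∑ p : Fin 2, c p * d p * S := by
        refine Finset.sum_congr rfl fun p _ => ?_
        fin_cases p <;> simp [Fin.sum_univ_two]
    _ = (∑ p : Fin 2, c p * d p) * S := (Finset.sum_mul _ _ _).symm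
    _ = S * (inner ℝ v w : ℝ) := by
        rw [mul_comm]
        congr 1
        have h := e.sum_inner_mul_inner v w
        rw [hc, hd]
        simp only []
        rw [← h]
        exact Finset.sum_congr rfl fun p _ => by rw [real_inner_comm (e p) v]
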